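/- Let p be an odd prime and let k and n be positive integers. If k ≡ n ≡ 0 (mod p-1) or k ≡ n ≡ 1 (mod p-1), then B_n^{(-k)} ≡ 2 (mod p). -/
import Mathlib


/-- Stirling numbers of the second kind. -/
def stirling2 : ℕ → ℕ → ℕ
  | 0, 0 => 1
  | 0, _ + 1 => 0
  | _ + 1, 0 => 0
  | n + 1, m + 1 => (m + 1) * stirling2 n (m + 1) + stirling2 n m

/-- The poly-Bernoulli number `B_n^{(-k)}` with negative upper index `-k`. -/
def polyBernoulliB (k n : ℕ) : ℤ :=
  (-1 : ℤ) ^ n * ∑ m ∈ Finset.range (n + 1),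
    (-1 : ℤ) ^ m * (m.factorial : ℤ) * (stirling2 n m : ℤ) * ((m : ℤ) + 1) ^ k

/-- The poly-Bernoulli number of type C, `C_n^{(-k)}`, with negative upper index `-k`. -/
def polyBernoulliC (k n : ℕ) : ℤ :=
  (-1 : ℤ) ^ n * ∑ m ∈ Finset.range (n + 1),
    (-1 : ℤ) ^ m * (m.factorial : ℤ) * (stirling2 (n + 1) (m + 1) : ℤ) * ((m : ℤ) + 1) ^ k

lemma stirling2_succ (n m : ℕ) :
    stirling2 (n+1) (m+1) = (m+1) * stirling2 n (m+1) + stirling2 n m := rfl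

lemma stirling2_zero_succ (m : ℕ) : stirling2 0 (m+1) = 0 := rfl
lemma stirling2_succ_zero (n : ℕ) : stirling2 (n+1) 0 = 0 := rfl

lemma stirling2_succ_one : ∀ n, stirling2 (n+1) 1 = 1
  | 0 => rfl
  | n+1 => by
    rw [stirling2_succ, stirling2_succ_one n, stirling2_succ_zero]

lemma stirling2_one_two (m : ℕ) : stirling2 1 (m+2) = 0 := by
  rw [stirling2_succ, stirling2_zero_succ, stirling2_zero_succ]
  ring

lemma key (n m : ℕ) :
    (-1:ℤ)^m * m.factorial * stirling2 n m
      = ∑ l ∈ Finset.range (m+1), (-1:ℤ)^l * (m.choose l) * (l:ℤ)^n := by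
  induction n generalizing m with
  | zero =>
    simp only [pow_zero, mul_one]
    rw [Int.alternating_sum_range_choose]
    cases m with
    | zero => simp [stirling2]
    | succ m => simp [stirling2_zero_succ]
  | succ n ih =>
    cases m with
    | zero => simp [stirling2_succ_zero]
    | succ m =>
      have step : ∀ l ∈ Finset.range (m+2),
          (-1:ℤ)^l * (((m+1).choose l : ℕ) : ℤ) * (l:ℤ)^(n+1)
            = ((m:ℤ)+1) * ((-1)^l * (((m+1).choose l : ℕ) : ℤ) * (l:ℤ)^n)
              - ((m:ℤ)+1) * ((-1)^l * ((m.choose l : ℕ) : ℤ) * (l:ℤ)^n) := by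
        intro l _
        rcases l with _ | l
        · rcases n with _ | n <;> simp
        · have h1 : (((m+1).choose (l+1) : ℕ) : ℤ) * ((l:ℤ)+1)
              = ((m:ℤ)+1) * ((m.choose l : ℕ) : ℤ) := by
            exact_mod_cast congrArg (Nat.cast : ℕ → ℤ) (Nat.add_one_mul_choose_eq m l).symm
          have h2 : (((m+1).choose (l+1) : ℕ) : ℤ)
              = ((m.choose l : ℕ) : ℤ) + ((m.choose (l+1) : ℕ) : ℤ) := by
            exact_mod_cast congrArg (Nat.cast : ℕ → ℤ) (Nat.choose_succ_succ m l)
          push_cast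
          push_cast at h1 h2
          have hp : ((l:ℤ)+1)^(n+1) = ((l:ℤ)+1)^n * ((l:ℤ)+1) := by ring
          rw [hp]
          linear_combination ((-1:ℤ)^(l+1) * ((l:ℤ)+1)^n) * h1 -
            (((m:ℤ)+1) * ((-1:ℤ)^(l+1) * ((l:ℤ)+1)^n)) * h2
      rw [Finset.sum_congr rfl step, Finset.sum_sub_distrib, ← Finset.mul_sum, ← Finset.mul_sum]
      have last : ∑ l ∈ Finset.range (m+2), (-1:ℤ)^l * ((m.choose l : ℕ) : ℤ) * (l:ℤ)^n
          = ∑ l ∈ Finset.range (m+1), (-1:ℤ)^l * ((m.choose l : ℕ) : ℤ) * (l:ℤ)^n := by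
        rw [Finset.sum_range_succ]
        simp [Nat.choose_succ_self]
      rw [last, ← ih (m+1), ← ih m, stirling2_succ]
      push_cast [Nat.factorial_succ]
      ring

lemma factorial_cast_zero (p m : ℕ) [Fact p.Prime] (h : p ≤ m) :
    ((m.factorial : ℕ) : ZMod p) = 0 := by
  rw [ZMod.natCast_eq_zero_iff]
  exact Nat.dvd_factorial (Fact.out (p := p.Prime)).pos h

lemma keyZ (p n m : ℕ) :
    ∑ l ∈ Finset.range (m+1), (-1:ZMod p)^l * (m.choose l) * (l:ZMod p)^n
      = (-1:ZMod p)^m * m.factorial * stirling2 n m := by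
  have := congrArg (fun z : ℤ => ((z : ZMod p))) (key n m)
  push_cast at this
  exact this.symm

lemma pow_modeq_one {p : ℕ} [Fact p.Prime] (hp3 : 3 ≤ p) {n : ℕ} (hn : 0 < n)
    (h : n ≡ 1 [MOD p - 1]) (x : ZMod p) : x ^ n = x := by
  have h1 : n % (p-1) = 1 := by
    have h' : n % (p-1) = 1 % (p-1) := h
    rwa [Nat.mod_eq_of_lt (by omega : 1 < p - 1)] at h'
  have hn' : n = (p-1) * (n / (p-1)) + 1 := by
    conv_lhs => rw [← Nat.div_add_mod n (p-1)]
    omega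
  by_cases hx : x = 0
  · subst hx; rw [zero_pow hn.ne']
  · rw [hn', pow_add, pow_mul, ZMod.pow_card_sub_one_eq_one hx, one_pow, one_mul, pow_one]

lemma pow_modeq_zero {p : ℕ} [Fact p.Prime] (hp3 : 3 ≤ p) {n : ℕ} (hn : 0 < n)
    (h : n ≡ 0 [MOD p - 1]) {x : ZMod p} (hx : x ≠ 0) : x ^ n = 1 := by
  have h1 : n % (p-1) = 0 := by
    have h' : n % (p-1) = 0 % (p-1) := h
    simpa using h'
  have hd : (p-1) ∣ n := Nat.dvd_of_mod_eq_zero h1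
  obtain ⟨c, hc⟩ := hd
  rw [hc, pow_mul, ZMod.pow_card_sub_one_eq_one hx, one_pow]


noncomputable def Fz (p k n m : ℕ) : ZMod p :=
  (-1:ZMod p)^m * m.factorial * stirling2 n m * ((m:ZMod p)+1)^k

lemma Fz_zero (p k n : ℕ) : Fz p k (n+1) 0 = 0 := by
  simp [Fz, stirling2_succ_zero]

lemma Fz_one {p : ℕ} [Fact p.Prime] (hp3 : 3 ≤ p) {k : ℕ} (hk : 0 < k)
    (hk1 : k ≡ 1 [MOD p - 1]) (n : ℕ) : Fz p k (n+1) 1 = -2 := by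
  have h2 : ((1:ZMod p)+1)^k = (1:ZMod p)+1 := pow_modeq_one hp3 hk hk1 _
  simp [Fz, stirling2_succ_one, h2]
  ring

lemma Fz_ge_two {p : ℕ} [Fact p.Prime] (hp3 : 3 ≤ p) {k n : ℕ} (hn : 0 < n)
    (hn1 : n ≡ 1 [MOD p - 1]) (m : ℕ) : Fz p k n (m+2) = 0 := by
  have hinner : ∑ l ∈ Finset.range (m+2+1), (-1:ZMod p)^l * ((m+2).choose l) * (l:ZMod p)^n
      = (-1:ZMod p)^(m+2) * (m+2).factorial * stirling2 n (m+2) := keyZ p n (m+2)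
  have hpow : ∀ l ∈ Finset.range (m+2+1),
      (-1:ZMod p)^l * ((m+2).choose l) * (l:ZMod p)^n
        = (-1:ZMod p)^l * ((m+2).choose l) * (l:ZMod p)^1 := by
    intro l _
    rw [pow_modeq_one hp3 hn hn1, pow_one]
  rw [Finset.sum_congr rfl hpow, keyZ p 1 (m+2), stirling2_one_two] at hinner
  unfold Fz
  rw [← hinner]
  push_cast
  ring

lemma Fz_big {p : ℕ} [Fact p.Prime] {k n m : ℕ} (h : p ≤ m) : Fz p k n m = 0 := by
  unfold Fz
  rw [factorial_cast_zero p m h]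
  ring

lemma Fz_pm1 {p : ℕ} [Fact p.Prime] (hp3 : 3 ≤ p) {k : ℕ} (hk : 0 < k) (n : ℕ) :
    Fz p k n (p-1) = 0 := by
  have : (((p-1:ℕ)) : ZMod p) + 1 = 0 := by
    rw [Nat.cast_sub (by omega : 1 ≤ p)]
    simp
  unfold Fz
  rw [this, zero_pow hk.ne']
  ring

lemma Fz_mid {p : ℕ} [Fact p.Prime] (hp3 : 3 ≤ p) {k n m : ℕ} (hk : 0 < k) (hn : 0 < n)
    (hk0 : k ≡ 0 [MOD p - 1]) (hn0 : n ≡ 0 [MOD p - 1])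
    (hm1 : 1 ≤ m) (hm2 : m ≤ p - 2) : Fz p k n m = -1 := by
  have hmne : ((m:ZMod p)+1) ≠ 0 := by
    have : ((m:ZMod p)+1) = ((m+1 : ℕ) : ZMod p) := by push_cast; ring
    rw [this, Ne, ZMod.natCast_eq_zero_iff]
    intro hdvd
    have := Nat.le_of_dvd (by omega) hdvd
    omega
  have hpowk : ((m:ZMod p)+1)^k = 1 := pow_modeq_zero hp3 hk hk0 hmne
  have hinner : ∑ l ∈ Finset.range (m+1), (-1:ZMod p)^l * (m.choose l) * (l:ZMod p)^n
      = (-1:ZMod p)^m * m.factorial * stirling2 n m := keyZ p n m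
  have hpow : ∀ l ∈ Finset.range (m+1),
      (-1:ZMod p)^l * (m.choose l) * (l:ZMod p)^n
        = (-1:ZMod p)^l * (m.choose l) * (l:ZMod p)^0 - (if 0 = l then 1 else 0) := by
    intro l hl
    rcases l with _ | l
    · simp [zero_pow hn.ne']
    · have hlne : ((l+1:ℕ) : ZMod p) ≠ 0 := by
        rw [Ne, ZMod.natCast_eq_zero_iff]
        intro hdvd
        have hlm : l + 1 ≤ m := by
          have := Finset.mem_range.mp hl; omega
        have := Nat.le_of_dvd (by omega) hdvd
        omega
      have : ((l+1:ℕ) : ZMod p)^n = 1 := pow_modeq_zero hp3 hn hn0 hlne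
      push_cast at this ⊢
      rw [this]
      simp
  obtain ⟨m', rfl⟩ : ∃ m', m = m'+1 := ⟨m-1, by omega⟩
  rw [Finset.sum_congr rfl hpow, Finset.sum_sub_distrib, keyZ p 0 (m'+1),
      Finset.sum_ite_eq, if_pos (Finset.mem_range.mpr (by omega : 0 < m'+1+1)),
      stirling2_zero_succ] at hinner
  push_cast at hinner
  unfold Fz
  rw [hpowk, mul_one, ← hinner]
  ring


theorem polyBernoulliB_eq_two_mod_p (p : ℕ) (hp : p.Prime) (hodd : Odd p)
    (k n : ℕ) (hk : 0 < k) (hn : 0 < n)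
    (h : (k ≡ 0 [MOD p - 1] ∧ n ≡ 0 [MOD p - 1]) ∨
         (k ≡ 1 [MOD p - 1] ∧ n ≡ 1 [MOD p - 1])) :
    polyBernoulliB k n ≡ 2 [ZMOD (p : ℤ)] := by
  haveI : Fact p.Prime := ⟨hp⟩
  obtain ⟨t, ht⟩ := hodd
  have hp3 : 3 ≤ p := by have := hp.two_le; omega
  have main : ((polyBernoulliB k n : ℤ) : ZMod p) = ((2:ℤ) : ZMod p) := by
    unfold polyBernoulliB
    push_cast
    have hsum : ∀ m ∈ Finset.range (n+1),
        (-1:ZMod p)^m * (m.factorial : ZMod p) * (stirling2 n m : ZMod p) * ((m:ZMod p)+1)^k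
          = Fz p k n m := by
      intro m _; rfl
    rw [Finset.sum_congr rfl hsum]
    rcases h with ⟨hk0, hn0⟩ | ⟨hk1, hn1⟩
    · have hdvd : (p-1) ∣ n := Nat.modEq_zero_iff_dvd.mp hn0
      obtain ⟨c, hc⟩ := hdvd
      have hc0 : 0 < c := by
        rcases Nat.eq_zero_or_pos c with rfl | hc0
        · omega
        · exact hc0
      have hnge : p - 1 ≤ n := by
        have := Nat.le_mul_of_pos_right (p-1) hc0
        omega
      have heven : Even n := by
        rw [hc]; exact Even.mul_right (show Even (p-1) from ⟨t, by omega⟩) c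
      have hterm : ∀ m ∈ Finset.range (n+1),
          Fz p k n m = if m ∈ Finset.Icc 1 (p-2) then (-1:ZMod p) else 0 := by
        intro m _
        by_cases h1 : m ∈ Finset.Icc 1 (p-2)
        · rw [if_pos h1]
          obtain ⟨ha, hb⟩ := Finset.mem_Icc.mp h1
          exact Fz_mid hp3 hk hn hk0 hn0 ha hb
        · rw [if_neg h1]
          rw [Finset.mem_Icc] at h1
          push_neg at h1
          rcases Nat.eq_zero_or_pos m with rfl | hm1
          · obtain ⟨n', rfl⟩ : ∃ n', n = n'+1 := ⟨n-1, by omega⟩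
            exact Fz_zero p k n'
          · rcases Nat.lt_or_ge m p with hlt | hge
            · have hmeq : m = p - 1 := by omega
              rw [hmeq]
              exact Fz_pm1 hp3 hk n
            · exact Fz_big hge
      rw [Finset.sum_congr rfl hterm, Finset.sum_ite_mem]
      have hsub : Finset.range (n+1) ∩ Finset.Icc 1 (p-2) = Finset.Icc 1 (p-2) := by
        apply Finset.inter_eq_right.mpr
        intro x hx
        rw [Finset.mem_Icc] at hx; rw [Finset.mem_range]; omega
      rw [hsub, Finset.sum_const, Nat.card_Icc]
      have hcard : p - 2 + 1 - 1 = p - 2 := by omega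
      rw [hcard, nsmul_eq_mul]
      have hc2 : ((p - 2 : ℕ) : ZMod p) = -2 := by
        rw [Nat.cast_sub (by omega : 2 ≤ p)]; simp
      rw [hc2, Even.neg_one_pow heven]
      push_cast
      ring
    · have hodd' : Odd n := by
        have h1 : n % (p-1) = 1 := by
          have h' : n % (p-1) = 1 % (p-1) := hn1
          rwa [Nat.mod_eq_of_lt (by omega : 1 < p-1)] at h'
        obtain ⟨r, hr⟩ :=
          Even.mul_right (show Even (p-1) from ⟨t, by omega⟩) (n / (p-1))
        have := Nat.div_add_mod n (p-1)
        rw [Nat.odd_iff]; omega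
      have hterm : ∀ m ∈ Finset.range (n+1),
          Fz p k n m = if 1 = m then (-2:ZMod p) else 0 := by
        intro m _
        rcases m with _ | _ | m
        · rw [if_neg (by omega)]
          obtain ⟨n', rfl⟩ : ∃ n', n = n'+1 := ⟨n-1, by omega⟩
          exact Fz_zero p k n'
        · rw [if_pos rfl]
          obtain ⟨n', rfl⟩ : ∃ n', n = n'+1 := ⟨n-1, by omega⟩
          exact Fz_one hp3 hk hk1 n'
        · rw [if_neg (by omega)]
          exact Fz_ge_two hp3 hn hn1 m
      rw [Finset.sum_congr rfl hterm, Finset.sum_ite_eq,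
          if_pos (Finset.mem_range.mpr (by omega : 1 < n+1)), Odd.neg_one_pow hodd']
      push_cast
      ring
  exact (ZMod.intCast_eq_intCast_iff' _ _ _).mp main
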